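/- Let n be a positive integer, θ = π/n, α real, z, ζ complex with |z| = 1 and all the denominators z·ζ·sin(kθ) + z·sin(α-kθ) - ζ·sin(α+kθ) + sin(kθ) and z·conj(ζ)·sin(α+kθ) - (z+conj(ζ))·sin(kθ) - sin(α-kθ) nonzero for 0 ≤ k ≤ n-1. Then Re( z · ∑_{k=0}^{n-1} [ (ζ·sin(kθ)+sin(α-kθ))/(z·ζ·sin(kθ)+z·sin(α-kθ)-ζ·sin(α+kθ)+sin(kθ)) + (conj(ζ)·sin(α+kθ)-sin(kθ))/(z·conj(ζ)·sin(α+kθ)-(z+conj(ζ))·sin(kθ)-sin(α-kθ)) ] ) = n. -/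

import Mathlib

lemma aux16 (z ζ : ℂ) (s t u : ℝ) (hz0 : z ≠ 0) (hcz : (starRingEnd ℂ) z = z⁻¹)
    (hd1 : z * ζ * (s : ℂ) + z * (u : ℂ) - ζ * (t : ℂ) + (s : ℂ) ≠ 0)
    (hd2 : z * (starRingEnd ℂ) ζ * (t : ℂ) - (z + (starRingEnd ℂ) ζ) * (s : ℂ) - (u : ℂ) ≠ 0) :
    (z * ((ζ * (s : ℂ) + (u : ℂ)) / (z * ζ * (s : ℂ) + z * (u : ℂ) - ζ * (t : ℂ) + (s : ℂ)) +
      ((starRingEnd ℂ) ζ * (t : ℂ) - (s : ℂ)) /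
        (z * (starRingEnd ℂ) ζ * (t : ℂ) - (z + (starRingEnd ℂ) ζ) * (s : ℂ) - (u : ℂ)))).re = 1 := by
  set w := (starRingEnd ℂ) ζ with hw
  have hA : (starRingEnd ℂ) (z * ((ζ * (s : ℂ) + (u : ℂ)) /
      (z * ζ * (s : ℂ) + z * (u : ℂ) - ζ * (t : ℂ) + (s : ℂ))))
      = -((w * (s:ℂ) + (u:ℂ)) / (z * w * (t:ℂ) - (z + w) * (s:ℂ) - (u:ℂ))) := by
    rw [map_mul, map_div₀]
    simp only [map_add, map_sub, map_mul, Complex.conj_ofReal, hcz, ← hw]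
    have hX : z⁻¹ * w * (s:ℂ) + z⁻¹ * (u:ℂ) - w * (t:ℂ) + (s:ℂ) ≠ 0 := by
      intro h
      apply hd2
      have h2 : z * (z⁻¹ * w * (s:ℂ) + z⁻¹ * (u:ℂ) - w * (t:ℂ) + (s:ℂ))
          = -(z * w * (t:ℂ) - (z + w) * (s:ℂ) - (u:ℂ)) := by
        field_simp; ring
      rw [h, mul_zero] at h2
      exact neg_eq_zero.mp h2.symm
    rw [inv_mul_eq_div, div_div, ← neg_div, div_eq_div_iff (mul_ne_zero hX hz0) hd2]
    field_simp
    ring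
  have hB : z * ((w * (t:ℂ) - (s:ℂ)) / (z * w * (t:ℂ) - (z + w) * (s:ℂ) - (u:ℂ)))
      = 1 + (w * (s:ℂ) + (u:ℂ)) / (z * w * (t:ℂ) - (z + w) * (s:ℂ) - (u:ℂ)) := by
    rw [← mul_div_assoc, one_add_div hd2]
    congr 1; ring
  have split : z * ((ζ * (s : ℂ) + (u : ℂ)) / (z * ζ * (s : ℂ) + z * (u : ℂ) - ζ * (t : ℂ) + (s : ℂ)) +
      (w * (t:ℂ) - (s:ℂ)) / (z * w * (t:ℂ) - (z + w) * (s:ℂ) - (u:ℂ)))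
      = z * ((ζ * (s : ℂ) + (u : ℂ)) / (z * ζ * (s : ℂ) + z * (u : ℂ) - ζ * (t : ℂ) + (s : ℂ)))
        + z * ((w * (t:ℂ) - (s:ℂ)) / (z * w * (t:ℂ) - (z + w) * (s:ℂ) - (u:ℂ))) := by ring
  rw [split, Complex.add_re, hB]
  have hre : (z * ((ζ * (s : ℂ) + (u : ℂ)) /
      (z * ζ * (s : ℂ) + z * (u : ℂ) - ζ * (t : ℂ) + (s : ℂ)))).re
      = (-((w * (s:ℂ) + (u:ℂ)) / (z * w * (t:ℂ) - (z + w) * (s:ℂ) - (u:ℂ)))).re := by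
    rw [← hA, Complex.conj_re]
  rw [hre]
  simp

theorem stmt16 (n : ℕ) (hn : 0 < n) (θ α : ℝ) (hθ : θ = Real.pi / n)
    (z ζ : ℂ) (hz : ‖z‖ = 1)
    (hden1 : ∀ k < n, z * ζ * (Real.sin (k * θ) : ℂ) + z * (Real.sin (α - k * θ) : ℂ) -
            ζ * (Real.sin (α + k * θ) : ℂ) + (Real.sin (k * θ) : ℂ) ≠ 0)
    (hden2 : ∀ k < n, z * (starRingEnd ℂ) ζ * (Real.sin (α + k * θ) : ℂ) -
            (z + (starRingEnd ℂ) ζ) * (Real.sin (k * θ) : ℂ) - (Real.sin (α - k * θ) : ℂ) ≠ 0) :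
    (z * ∑ k ∈ Finset.range n,
      ((ζ * (Real.sin (k * θ) : ℂ) + (Real.sin (α - k * θ) : ℂ)) /
        (z * ζ * (Real.sin (k * θ) : ℂ) + z * (Real.sin (α - k * θ) : ℂ) -
          ζ * (Real.sin (α + k * θ) : ℂ) + (Real.sin (k * θ) : ℂ)) +
       ((starRingEnd ℂ) ζ * (Real.sin (α + k * θ) : ℂ) - (Real.sin (k * θ) : ℂ)) /
        (z * (starRingEnd ℂ) ζ * (Real.sin (α + k * θ) : ℂ) -
          (z + (starRingEnd ℂ) ζ) * (Real.sin (k * θ) : ℂ) - (Real.sin (α - k * θ) : ℂ)))).re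
    = n := by
  have hz0 : z ≠ 0 := by
    intro h; rw [h] at hz; simp at hz
  have hns : Complex.normSq z = 1 := by
    rw [Complex.normSq_eq_norm_sq, hz]; norm_num
  have hcz : (starRingEnd ℂ) z = z⁻¹ := by
    rw [Complex.inv_def, hns]; simp
  rw [Finset.mul_sum, Complex.re_sum,
    Finset.sum_congr rfl (fun (k : ℕ) hk => aux16 z ζ (Real.sin ((k:ℝ)*θ))
      (Real.sin (α + (k:ℝ)*θ)) (Real.sin (α - (k:ℝ)*θ)) hz0 hcz
      (hden1 k (Finset.mem_range.mp hk)) (hden2 k (Finset.mem_range.mp hk))),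
    Finset.sum_const, Finset.card_range]
  simp
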